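/- Let F be a field of characteristic zero, p a prime, and c ≥ c' ≥ 1 integers. Let A := F[x]/⟨Φ_{p^c}(x)⟩ and B := A[y]/⟨Φ_{p^{c'}}(y)⟩. Then there is an A-algebra isomorphism θ from B to the product algebra A^{φ(p^{c'})} of φ(p^{c'}) copies of A. -/

import Mathlib

open Polynomial

section General

variable {R : Type*} [CommRing R] [Nontrivial R]

theorem monic_eq_prod_of_roots' : ∀ (n : ℕ) (f : R[X]), f.Monic →
    f.natDegree = n → ∀ (r : Fin n → R), (∀ i, f.eval (r i) = 0) →
    (∀ i j, i ≠ j → IsUnit (r i - r j)) → f = ∏ i, (X - C (r i)) := by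
  intro n
  induction n with
  | zero =>
    intro f hf hdeg r _ _
    simpa using hf.natDegree_eq_zero.mp hdeg
  | succ n ih =>
    intro f hf hdeg r hroot hunit
    obtain ⟨g, hg⟩ := dvd_iff_isRoot.mpr (hroot 0)
    have hgm : g.Monic := (monic_X_sub_C (r 0)).of_mul_monic_left (hg ▸ hf)
    have hdg : g.natDegree = n := by
      have h2 := hdeg
      rw [hg, (monic_X_sub_C (r 0)).natDegree_mul hgm, natDegree_X_sub_C] at h2
      omega
    have hr : ∀ i : Fin n, g.eval (r i.succ) = 0 := by
      intro i
      have h0 := hroot i.succ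
      rw [hg, eval_mul, eval_sub, eval_X, eval_C] at h0
      exact ((hunit i.succ 0 (Fin.succ_ne_zero i)).mul_right_eq_zero).mp h0
    have hprod := ih g hgm hdg (fun i => r i.succ) hr
      (fun i j hij => hunit i.succ j.succ (by simpa using hij))
    rw [hg, hprod, Fin.prod_univ_succ]

variable {n : ℕ} (r : Fin n → R)

noncomputable def piRingEquivOfRoots
    (copI : Pairwise (Function.onFun IsCoprime fun i => Ideal.span ({X - C (r i)} : Set R[X]))) :
    (R[X] ⧸ (⨅ i : Fin n, Ideal.span ({X - C (r i)} : Set R[X]))) ≃+* (Fin n → R) :=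
  (Ideal.quotientInfRingEquivPiQuotient _ copI).trans <|
    RingEquiv.piCongrRight fun i => (quotientSpanXSubCAlgEquiv (r i)).toRingEquiv

theorem piRingEquivOfRoots_mk
    (copI : Pairwise (Function.onFun IsCoprime fun i => Ideal.span ({X - C (r i)} : Set R[X])))
    (q : R[X]) :
    piRingEquivOfRoots r copI (Ideal.Quotient.mk _ q) = fun i => q.eval (r i) := rfl

noncomputable def piAlgEquivOfRoots (f : R[X]) (hf : f.Monic)
    (hdeg : f.natDegree = n) (hroot : ∀ i, f.eval (r i) = 0)
    (hunit : ∀ i j, i ≠ j → IsUnit (r i - r j)) :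
    AdjoinRoot f ≃ₐ[R] (Fin n → R) := by
  have cop : ∀ i j : Fin n, i ≠ j → IsCoprime (X - C (r i)) (X - C (r j)) := by
    intro i j hij
    obtain ⟨u, hu⟩ := hunit j i (Ne.symm hij)
    have h1 : ((↑u⁻¹ : R)) * (r j - r i) = 1 := by rw [← hu]; exact u.inv_mul
    exact ⟨C (↑u⁻¹ : R), -C (↑u⁻¹ : R), by rw [← C_1, ← h1, C_mul, C_sub]; ring⟩
  have heq : Ideal.span {f} = ⨅ i, Ideal.span {X - C (r i)} := by
    rw [Ideal.iInf_span_singleton cop, ← monic_eq_prod_of_roots' n f hf hdeg r hroot hunit]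
  have copI : Pairwise (Function.onFun IsCoprime fun i => Ideal.span ({X - C (r i)} : Set R[X])) :=
    fun i j hij => (Ideal.isCoprime_span_singleton_iff _ _).mpr (cop i j hij)
  refine AlgEquiv.ofRingEquiv
    (f := (Ideal.quotEquivOfEq heq).trans (piRingEquivOfRoots r copI)) ?_
  intro a
  show (piRingEquivOfRoots r copI)
      ((Ideal.quotEquivOfEq heq) (Ideal.Quotient.mk (Ideal.span {f}) (C a)))
      = algebraMap R (Fin n → R) a
  have h1 : (Ideal.quotEquivOfEq heq) (Ideal.Quotient.mk (Ideal.span {f}) (C a)) =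
      Ideal.Quotient.mk (⨅ i, Ideal.span {X - C (r i)}) (C a) := Ideal.quotEquivOfEq_mk heq _
  refine Eq.trans (congrArg _ h1) ?_
  rw [piRingEquivOfRoots_mk]
  funext i
  simp

end General

/-- with A = F[x]/⟨Φ_{p^c}⟩ and B = A[y]/⟨Φ_{p^{c'}}(y)⟩,
there is an A-algebra isomorphism B ≃ A^{φ(p^{c'})}. -/
theorem adjoinRoot_cyclotomic_equiv_pi
    (F : Type*) [Field F] [CharZero F] (p : ℕ) (hp : p.Prime)
    (c c' : ℕ) (hc' : 1 ≤ c') (hcc : c' ≤ c) :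
    Nonempty
      (AdjoinRoot ((cyclotomic (p ^ c') F).map
          (algebraMap F (AdjoinRoot (cyclotomic (p ^ c) F))))
        ≃ₐ[AdjoinRoot (cyclotomic (p ^ c) F)]
          (Fin (p ^ c').totient → AdjoinRoot (cyclotomic (p ^ c) F))) := by
  have hp0 : 0 < p ^ c := pow_pos hp.pos c
  have hp0' : 0 < p ^ c' := pow_pos hp.pos c'
  set A := AdjoinRoot (cyclotomic (p ^ c) F) with hA
  haveI : Nontrivial A := by
    refine AdjoinRoot.nontrivial _ ?_
    rw [degree_cyclotomic]
    exact_mod_cast (Nat.cast_ne_zero (R := WithBot ℕ)).mpr (Nat.totient_pos.mpr hp0).ne'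
  set μ : A := AdjoinRoot.root (cyclotomic (p ^ c) F) with hμdef
  have hcycl0 : aeval μ (cyclotomic (p ^ c) F) = 0 := by
    rw [aeval_def, AdjoinRoot.algebraMap_eq]
    exact AdjoinRoot.eval₂_root _
  have hone : μ ^ (p ^ c) = 1 := by
    obtain ⟨q, hq⟩ := cyclotomic.dvd_X_pow_sub_one (p ^ c) F
    have h0 := congrArg (aeval μ) hq
    simp only [map_sub, map_pow, aeval_X, map_one, map_mul, hcycl0, zero_mul] at h0
    exact sub_eq_zero.mp h0
  have hμu : IsUnit μ := by
    refine IsUnit.of_mul_eq_one (a := μ) (μ ^ (p ^ c - 1)) ?_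
    rw [← pow_succ', Nat.sub_add_cancel hp0]
    exact hone
  -- units of the form μ^k - 1
  have key : ∀ k : ℕ, 0 < k → k < p ^ c → IsUnit (μ ^ k - 1) := by
    intro k hk hk'
    obtain ⟨ω, hω⟩ : ∃ ω : ℂ, IsPrimitiveRoot ω (p ^ c) :=
      ⟨_, Complex.isPrimitiveRoot_exp _ hp0.ne'⟩
    have hndvd : ¬ (cyclotomic (p ^ c) ℚ ∣ (X ^ k - 1 : ℚ[X])) := by
      intro hdvd
      have hc0 : (aeval ω) (cyclotomic (p ^ c) ℚ) = 0 := by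
        rw [aeval_def, ← eval_map, map_cyclotomic]
        exact hω.isRoot_cyclotomic hp0
      have h0 : (aeval ω) ((X : ℚ[X]) ^ k - 1) = 0 := by
        obtain ⟨q, hq⟩ := hdvd
        rw [hq, map_mul, hc0, zero_mul]
      simp only [map_sub, map_pow, aeval_X, map_one, sub_eq_zero] at h0
      exact absurd (Nat.le_of_dvd hk (hω.dvd_of_pow_eq_one k h0)) (not_le.mpr hk')
    have hcop : IsCoprime (cyclotomic (p ^ c) ℚ) ((X : ℚ[X]) ^ k - 1) :=
      ((cyclotomic.irreducible_rat hp0).coprime_iff_not_dvd).mpr hndvd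
    have hcopF : IsCoprime (cyclotomic (p ^ c) F) ((X : F[X]) ^ k - 1) := by
      have h2 := hcop.map (mapRingHom (algebraMap ℚ F))
      simpa only [coe_mapRingHom, map_cyclotomic, Polynomial.map_sub, Polynomial.map_pow,
        Polynomial.map_one, Polynomial.map_X] using h2
    obtain ⟨a, b, hab⟩ := hcopF
    have h3 := congrArg (aeval μ) hab
    simp only [map_add, map_mul, hcycl0, mul_zero, zero_add, map_sub, map_pow, aeval_X,
      map_one] at h3
    exact IsUnit.of_mul_eq_one _ ((mul_comm _ _).trans h3)
  -- roots of the mapped cyclotomic polynomial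
  have hrootlem : ∀ k : ℕ, Nat.Coprime k (p ^ c') →
      eval (μ ^ (p ^ (c - c') * k)) ((cyclotomic (p ^ c') F).map (algebraMap F A)) = 0 := by
    intro k hk
    obtain ⟨ω, hω⟩ : ∃ ω : ℂ, IsPrimitiveRoot ω (p ^ c) :=
      ⟨_, Complex.isPrimitiveRoot_exp _ hp0.ne'⟩
    have hsplit : p ^ c = p ^ (c - c') * p ^ c' := by
      rw [← pow_add]
      congr 1
      omega
    have hωm : IsPrimitiveRoot (ω ^ (p ^ (c - c'))) (p ^ c') := hω.pow hp0 hsplit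
    have hωmk : IsPrimitiveRoot ((ω ^ (p ^ (c - c'))) ^ k) (p ^ c') := hωm.pow_of_coprime k hk
    have hdvd : cyclotomic (p ^ c) ℚ ∣ (cyclotomic (p ^ c') ℚ).comp (X ^ (p ^ (c - c') * k)) := by
      rw [cyclotomic_eq_minpoly_rat hω hp0]
      apply minpoly.dvd
      rw [aeval_comp]
      simp only [map_pow, aeval_X]
      rw [pow_mul, aeval_def, ← eval_map, map_cyclotomic]
      exact hωmk.isRoot_cyclotomic hp0'
    have hdvdF : cyclotomic (p ^ c) F ∣
        (cyclotomic (p ^ c') F).comp (X ^ (p ^ (c - c') * k)) := by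
      have h2 := map_dvd (mapRingHom (algebraMap ℚ F)) hdvd
      simpa only [coe_mapRingHom, map_cyclotomic, map_comp, Polynomial.map_pow,
        Polynomial.map_X] using h2
    obtain ⟨q, hq⟩ := hdvdF
    have h3 : aeval μ ((cyclotomic (p ^ c') F).comp (X ^ (p ^ (c - c') * k))) = 0 := by
      rw [hq, map_mul, hcycl0, zero_mul]
    rw [aeval_comp] at h3
    simp only [map_pow, aeval_X] at h3
    rw [eval_map, ← aeval_def]
    exact h3
  haveI : NeZero (p ^ c') := ⟨hp0'.ne'⟩
  set N := (p ^ c').totient with hN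
  let e : Fin N ≃ (ZMod (p ^ c'))ˣ :=
    (Fintype.equivFinOfCardEq (ZMod.card_units_eq_totient _)).symm
  set r : Fin N → A := fun i => μ ^ (p ^ (c - c') * ((e i : ZMod (p ^ c')).val)) with hr
  have hroot : ∀ i, ((cyclotomic (p ^ c') F).map (algebraMap F A)).eval (r i) = 0 :=
    fun i => hrootlem _ (ZMod.val_coe_unit_coprime (e i))
  have main : ∀ a b : ℕ, a < p ^ c' → b < a →
      IsUnit (μ ^ (p ^ (c - c') * a) - μ ^ (p ^ (c - c') * b)) := by
    intro a b ha hba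
    have h1 : μ ^ (p ^ (c - c') * a) - μ ^ (p ^ (c - c') * b) =
        μ ^ (p ^ (c - c') * b) * (μ ^ (p ^ (c - c') * (a - b)) - 1) := by
      rw [mul_sub, mul_one, ← pow_add, ← Nat.mul_add, Nat.add_sub_cancel' hba.le]
    rw [h1]
    refine (hμu.pow _).mul (key _ ?_ ?_)
    · exact Nat.mul_pos (pow_pos hp.pos _) (by omega)
    · calc p ^ (c - c') * (a - b) < p ^ (c - c') * p ^ c' :=
            (mul_lt_mul_iff_right₀ (pow_pos hp.pos _)).mpr (by omega)
        _ = p ^ c := by rw [← pow_add]; congr 1; omega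
  have hunit : ∀ i j, i ≠ j → IsUnit (r i - r j) := by
    intro i j hij
    have hne : ((e i : ZMod (p ^ c')).val) ≠ ((e j : ZMod (p ^ c')).val) := by
      intro h
      exact hij (e.injective (Units.ext (ZMod.val_injective _ h)))
    rcases Nat.lt_or_ge ((e i : ZMod (p ^ c')).val) ((e j : ZMod (p ^ c')).val) with hlt | hge
    · have h2 := (main _ _ (ZMod.val_lt _) hlt).neg
      rw [neg_sub] at h2
      exact h2
    · exact main _ _ (ZMod.val_lt _) (lt_of_le_of_ne hge (Ne.symm hne))
  exact ⟨piAlgEquivOfRoots r ((cyclotomic (p ^ c') F).map (algebraMap F A))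
    ((cyclotomic.monic _ F).map _)
    (by rw [(cyclotomic.monic _ F).natDegree_map, natDegree_cyclotomic])
    hroot hunit⟩
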